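/- Let G be a finite simple graph that is mean valid with respect to two ordered partitions I_1, …, I_d and Ī_1, …, Ī_{d̄} of its vertex set (each being a partition into pairwise disjoint maximal independent sets, ordered by nonincreasing cardinality, and each satisfying the mean-validity inequality). Then for all j ∈ {1,…,d} and k ∈ {1,…,d̄}: if |I_j| ≠ |Ī_k|, then I_j ∩ Ī_k = ∅. -/

import Mathlib

/-- `S` is an independent set of the simple graph `G`. -/
def IsIndepF {V : Type*} (G : SimpleGraph V) (S : Finset V) : Prop :=
  ∀ a ∈ S, ∀ b ∈ S, ¬ G.Adj a b

/-- `S` is a maximal independent set of `G`. -/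
def IsMaxIndepF {V : Type*} [DecidableEq V] (G : SimpleGraph V) (S : Finset V) : Prop :=
  IsIndepF G S ∧ ∀ v, v ∉ S → ¬ IsIndepF G (insert v S)

/-- `I 1, …, I d` is an ordered partition of the vertex set of `G` into pairwise disjoint
maximal independent sets, of nonincreasing cardinality, witnessing that `G` is mean valid. -/
def MeanValidPartition {V : Type*} [Fintype V] [DecidableEq V] (G : SimpleGraph V)
    (d : ℕ) (I : ℕ → Finset V) : Prop :=
  2 ≤ d ∧
  (∀ s ∈ Finset.Icc 1 d, ∀ r ∈ Finset.Icc 1 d, s ≠ r → Disjoint (I s) (I r)) ∧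
  ((Finset.Icc 1 d).biUnion I = Finset.univ) ∧
  (∀ s ∈ Finset.Icc 1 d, IsMaxIndepF G (I s)) ∧
  (∀ s ∈ Finset.Icc 1 d, ∀ r ∈ Finset.Icc 1 d, s ≤ r → (I r).card ≤ (I s).card) ∧
  (∀ J : Finset V, IsIndepF G J →
    ∑ s ∈ Finset.Icc 1 d, ((J ∩ I s).card : ℝ) / ((I s).card : ℝ) ≤ 1)

/-- Abstract support lemma, by strong induction on the sizes of index sets. -/
lemma keyLemma : ∀ (n : ℕ) (S T : Finset ℕ) (a : ℕ → ℕ → ℝ) (c b : ℕ → ℝ),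
    S.card + T.card ≤ n →
    (∀ j ∈ S, ∀ k ∈ T, 0 ≤ a j k) →
    (∀ j ∈ S, 0 < c j) →
    (∀ k ∈ T, 0 < b k) →
    (∀ j ∈ S, ∑ k ∈ T, a j k / b k = 1) →
    (∀ j ∈ S, ∑ k ∈ T, a j k = c j) →
    (∀ k ∈ T, ∑ j ∈ S, a j k / c j = 1) →
    (∀ k ∈ T, ∑ j ∈ S, a j k = b k) →
    ∀ j ∈ S, ∀ k ∈ T, a j k ≠ 0 → c j = b k := by
  intro n
  induction n with
  | zero =>
    intro S T a c b hcard _ _ _ _ _ _ _ j hj k hk _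
    have : S = ∅ := Finset.card_eq_zero.mp (by omega)
    simp [this] at hj
  | succ n ih =>
    classical
    intro S T a c b hcard ha0 hc hb hrowb hrowa hcolc hcola j hj k hk ha
    have hS : S.Nonempty := ⟨j, hj⟩
    have hT : T.Nonempty := ⟨k, hk⟩
    set M : ℝ := max (S.sup' hS c) (T.sup' hT b) with hMdef
    have hcM : ∀ j' ∈ S, c j' ≤ M :=
      fun j' hj' => le_trans (Finset.le_sup' c hj') (le_max_left _ _)
    have hbM : ∀ k' ∈ T, b k' ≤ M :=
      fun k' hk' => le_trans (Finset.le_sup' b hk') (le_max_right _ _)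
    have hM0 : 0 < M := lt_of_lt_of_le (hc j hj) (hcM j hj)
    -- Step A: rows attaining the max have support only on max columns
    have stepA : ∀ j' ∈ S, c j' = M → ∀ k' ∈ T, a j' k' ≠ 0 → b k' = M := by
      intro j' hj' hcj' k' hk' haz
      have hsum2 : ∑ k'' ∈ T, a j' k'' / M = 1 := by
        rw [← Finset.sum_div, hrowa j' hj', hcj', div_self hM0.ne']
      have hzero : ∑ k'' ∈ T, (a j' k'' / b k'' - a j' k'' / M) = 0 := by
        rw [Finset.sum_sub_distrib, hrowb j' hj', hsum2, sub_self]
      have hnn : ∀ k'' ∈ T, 0 ≤ a j' k'' / b k'' - a j' k'' / M := by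
        intro k'' hk''
        have h1 : a j' k'' / M ≤ a j' k'' / b k'' := by
          gcongr
          · exact ha0 j' hj' k'' hk''
          · exact hb k'' hk''
          · exact hbM k'' hk''
        linarith
      have heq0 := (Finset.sum_eq_zero_iff_of_nonneg hnn).mp hzero k' hk'
      have heq : a j' k' / b k' = a j' k' / M := by linarith
      rw [div_eq_div_iff (hb k' hk').ne' hM0.ne'] at heq
      exact (mul_left_cancel₀ haz heq).symm
    -- Step B: columns attaining the max have support only on max rows
    have stepB : ∀ k' ∈ T, b k' = M → ∀ j' ∈ S, a j' k' ≠ 0 → c j' = M := by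
      intro k' hk' hbk' j' hj' haz
      have hsum2 : ∑ j'' ∈ S, a j'' k' / M = 1 := by
        rw [← Finset.sum_div, hcola k' hk', hbk', div_self hM0.ne']
      have hzero : ∑ j'' ∈ S, (a j'' k' / c j'' - a j'' k' / M) = 0 := by
        rw [Finset.sum_sub_distrib, hcolc k' hk', hsum2, sub_self]
      have hnn : ∀ j'' ∈ S, 0 ≤ a j'' k' / c j'' - a j'' k' / M := by
        intro j'' hj''
        have h1 : a j'' k' / M ≤ a j'' k' / c j'' := by
          gcongr
          · exact ha0 j'' hj'' k' hk'
          · exact hc j'' hj''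
          · exact hcM j'' hj''
        linarith
      have heq0 := (Finset.sum_eq_zero_iff_of_nonneg hnn).mp hzero j' hj'
      have heq : a j' k' / c j' = a j' k' / M := by linarith
      rw [div_eq_div_iff (hc j' hj').ne' hM0.ne'] at heq
      exact (mul_left_cancel₀ haz heq).symm
    by_cases hcj : c j = M
    · exact hcj.trans (stepA j hj hcj k hk ha).symm
    by_cases hbk : b k = M
    · exact (stepB k hk hbk j hj ha).trans hbk.symm
    -- recurse on the sub-system of non-maximal rows/columns
    set S' : Finset ℕ := S.filter (fun x => c x ≠ M) with hS'def
    set T' : Finset ℕ := T.filter (fun x => b x ≠ M) with hT'def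
    have hjS' : j ∈ S' := Finset.mem_filter.mpr ⟨hj, hcj⟩
    have hkT' : k ∈ T' := Finset.mem_filter.mpr ⟨hk, hbk⟩
    have hattain : (∃ x ∈ S, c x = M) ∨ (∃ y ∈ T, b y = M) := by
      obtain ⟨x, hx, hxe⟩ := Finset.exists_mem_eq_sup' hS c
      obtain ⟨y, hy, hye⟩ := Finset.exists_mem_eq_sup' hT b
      rcases max_cases (S.sup' hS c) (T.sup' hT b) with ⟨h1, _⟩ | ⟨h1, _⟩
      · exact Or.inl ⟨x, hx, by rw [← hxe, ← h1]⟩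
      · exact Or.inr ⟨y, hy, by rw [← hye, ← h1]⟩
    have hlt : S'.card + T'.card < S.card + T.card := by
      have h1 : S'.card ≤ S.card := Finset.card_filter_le _ _
      have h2 : T'.card ≤ T.card := Finset.card_filter_le _ _
      rcases hattain with ⟨x, hx, hxe⟩ | ⟨y, hy, hye⟩
      · have : S' ⊂ S := Finset.filter_ssubset.mpr ⟨x, hx, by simp [hxe]⟩
        have := Finset.card_lt_card this
        omega
      · have : T' ⊂ T := Finset.filter_ssubset.mpr ⟨y, hy, by simp [hye]⟩
        have := Finset.card_lt_card this
        omega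
    -- transfer the four sum hypotheses
    have hzeroST : ∀ j' ∈ S', ∀ k'' ∈ T, k'' ∉ T' → a j' k'' = 0 := by
      intro j' hj' k'' hk'' hk''n
      obtain ⟨hj'S, hj'ne⟩ := Finset.mem_filter.mp hj'
      have hbk'' : b k'' = M := by
        by_contra h; exact hk''n (Finset.mem_filter.mpr ⟨hk'', h⟩)
      by_contra haz
      exact hj'ne (stepB k'' hk'' hbk'' j' hj'S haz)
    have hzeroTS : ∀ k' ∈ T', ∀ j'' ∈ S, j'' ∉ S' → a j'' k' = 0 := by
      intro k' hk' j'' hj'' hj''n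
      obtain ⟨hk'T, hk'ne⟩ := Finset.mem_filter.mp hk'
      have hcj'' : c j'' = M := by
        by_contra h; exact hj''n (Finset.mem_filter.mpr ⟨hj'', h⟩)
      by_contra haz
      exact hk'ne (stepA j'' hj'' hcj'' k' hk'T haz)
    have hrowb' : ∀ j' ∈ S', ∑ k' ∈ T', a j' k' / b k' = 1 := by
      intro j' hj'
      rw [Finset.sum_subset (Finset.filter_subset _ T)
        (fun k'' hk'' hn => by rw [hzeroST j' hj' k'' hk'' hn, zero_div])]
      exact hrowb j' (Finset.mem_filter.mp hj').1
    have hrowa' : ∀ j' ∈ S', ∑ k' ∈ T', a j' k' = c j' := by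
      intro j' hj'
      rw [Finset.sum_subset (Finset.filter_subset _ T)
        (fun k'' hk'' hn => hzeroST j' hj' k'' hk'' hn)]
      exact hrowa j' (Finset.mem_filter.mp hj').1
    have hcolc' : ∀ k' ∈ T', ∑ j' ∈ S', a j' k' / c j' = 1 := by
      intro k' hk'
      rw [Finset.sum_subset (Finset.filter_subset _ S)
        (fun j'' hj'' hn => by rw [hzeroTS k' hk' j'' hj'' hn, zero_div])]
      exact hcolc k' (Finset.mem_filter.mp hk').1
    have hcola' : ∀ k' ∈ T', ∑ j' ∈ S', a j' k' = b k' := by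
      intro k' hk'
      rw [Finset.sum_subset (Finset.filter_subset _ S)
        (fun j'' hj'' hn => hzeroTS k' hk' j'' hj'' hn)]
      exact hcola k' (Finset.mem_filter.mp hk').1
    exact ih S' T' a c b (by omega)
      (fun j' hj' k' hk' => ha0 j' (Finset.mem_filter.mp hj').1 k' (Finset.mem_filter.mp hk').1)
      (fun j' hj' => hc j' (Finset.mem_filter.mp hj').1)
      (fun k' hk' => hb k' (Finset.mem_filter.mp hk').1)
      hrowb' hrowa' hcolc' hcola' j hjS' k hkT' ha

/-- In a partition into disjoint sets covering the universe, cardinalities add up. -/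
lemma partition_card {V : Type*} [Fintype V] [DecidableEq V] (d : ℕ) (Ib : ℕ → Finset V)
    (hdisj : ∀ s ∈ Finset.Icc 1 d, ∀ r ∈ Finset.Icc 1 d, s ≠ r → Disjoint (Ib s) (Ib r))
    (hcov : (Finset.Icc 1 d).biUnion Ib = Finset.univ) (J : Finset V) :
    ∑ t ∈ Finset.Icc 1 d, (J ∩ Ib t).card = J.card := by
  rw [← Finset.card_biUnion]
  · congr 1
    ext x
    simp only [Finset.mem_biUnion, Finset.mem_inter]
    constructor
    · rintro ⟨t, _, hx, _⟩; exact hx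
    · intro hx
      have : x ∈ (Finset.Icc 1 d).biUnion Ib := by rw [hcov]; exact Finset.mem_univ x
      obtain ⟨t, ht, hxt⟩ := Finset.mem_biUnion.mp this
      exact ⟨t, ht, hx, hxt⟩
  · intro s hs r hr hsr
    exact Finset.disjoint_of_subset_left Finset.inter_subset_right
      (Finset.disjoint_of_subset_right Finset.inter_subset_right (hdisj s hs r hr hsr))

lemma maxIndep_card_pos {V : Type*} [Fintype V] [DecidableEq V] (G : SimpleGraph V)
    (S : Finset V) (h : IsMaxIndepF G S) (hV : (Finset.univ : Finset V).Nonempty) :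
    0 < S.card := by
  by_contra hcard
  have hempty : S = ∅ := Finset.card_eq_zero.mp (by omega)
  obtain ⟨v, _⟩ := hV
  apply h.2 v (by simp [hempty])
  intro a ha b hb
  rw [hempty] at ha hb
  simp only [Finset.mem_insert, Finset.notMem_empty, or_false] at ha hb
  subst ha; subst hb
  exact G.irrefl

/-- The cross double sum equals `d`. -/
lemma crossSum {V : Type*} [Fintype V] [DecidableEq V] (G : SimpleGraph V)
    (d dbar : ℕ) (I Ibar : ℕ → Finset V)
    (hI : MeanValidPartition G d I) (hIbar : MeanValidPartition G dbar Ibar)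
    (hV : (Finset.univ : Finset V).Nonempty) :
    ∑ t ∈ Finset.Icc 1 dbar, ∑ s ∈ Finset.Icc 1 d,
      ((Ibar t ∩ I s).card : ℝ) / ((I s).card : ℝ) = d := by
  obtain ⟨_, hdisj, hcov, hmax, _, _⟩ := hI
  obtain ⟨_, hdisjb, hcovb, _, _, _⟩ := hIbar
  rw [Finset.sum_comm]
  have : ∀ s ∈ Finset.Icc 1 d,
      ∑ t ∈ Finset.Icc 1 dbar, ((Ibar t ∩ I s).card : ℝ) / ((I s).card : ℝ) = 1 := by
    intro s hs
    rw [← Finset.sum_div]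
    have hps : ∑ t ∈ Finset.Icc 1 dbar, ((Ibar t ∩ I s).card : ℝ) = ((I s).card : ℝ) := by
      have := partition_card dbar Ibar hdisjb hcovb (I s)
      push_cast [← this]
      exact Finset.sum_congr rfl (fun t _ => by rw [Finset.inter_comm])
    rw [hps, div_self]
    exact_mod_cast (maxIndep_card_pos G (I s) (hmax s hs) hV).ne'
  rw [Finset.sum_congr rfl this]
  simp

lemma dim_le {V : Type*} [Fintype V] [DecidableEq V] (G : SimpleGraph V)
    (d dbar : ℕ) (I Ibar : ℕ → Finset V)
    (hI : MeanValidPartition G d I) (hIbar : MeanValidPartition G dbar Ibar)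
    (hV : (Finset.univ : Finset V).Nonempty) :
    d ≤ dbar := by
  have h1 := crossSum G d dbar I Ibar hI hIbar hV
  have h2 : ∑ t ∈ Finset.Icc 1 dbar, ∑ s ∈ Finset.Icc 1 d,
      ((Ibar t ∩ I s).card : ℝ) / ((I s).card : ℝ) ≤ dbar := by
    calc _ ≤ ∑ t ∈ Finset.Icc 1 dbar, (1 : ℝ) := by
            apply Finset.sum_le_sum
            intro t ht
            exact hI.2.2.2.2.2 (Ibar t) ((hIbar.2.2.2.1 t ht).1)
      _ = dbar := by simp
  have : (d : ℝ) ≤ dbar := by rw [← h1]; exact h2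
  exact_mod_cast this

lemma all_eq_one (S : Finset ℕ) (f : ℕ → ℝ) (hle : ∀ t ∈ S, f t ≤ 1)
    (hsum : ∑ t ∈ S, f t = S.card) : ∀ t ∈ S, f t = 1 := by
  have hzero : ∑ t ∈ S, (1 - f t) = 0 := by
    rw [Finset.sum_sub_distrib, hsum]; simp
  intro t ht
  have := (Finset.sum_eq_zero_iff_of_nonneg
    (fun t ht => by linarith [hle t ht])).mp hzero t ht
  linarith

theorem stmt5 {V : Type*} [Fintype V] [DecidableEq V] (G : SimpleGraph V)
    (d dbar : ℕ) (I Ibar : ℕ → Finset V)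
    (hI : MeanValidPartition G d I) (hIbar : MeanValidPartition G dbar Ibar) :
    ∀ j ∈ Finset.Icc 1 d, ∀ k ∈ Finset.Icc 1 dbar,
      (I j).card ≠ (Ibar k).card → I j ∩ Ibar k = ∅ := by
  intro j hj k hk hne
  by_cases hV : (Finset.univ : Finset V).Nonempty
  case neg =>
    rw [Finset.not_nonempty_iff_eq_empty] at hV
    have : I j ∩ Ibar k ⊆ Finset.univ := Finset.subset_univ _
    rw [hV] at this
    exact Finset.subset_empty.mp this
  -- V nonempty
  have hdd : d = dbar :=
    le_antisymm (dim_le G d dbar I Ibar hI hIbar hV) (dim_le G dbar d Ibar I hIbar hI hV)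
  obtain ⟨_, hdisj, hcov, hmax, _, hmv⟩ := id hI
  obtain ⟨_, hdisjb, hcovb, hmaxb, _, hmvb⟩ := id hIbar
  set S := Finset.Icc 1 d with hSdef
  set T := Finset.Icc 1 dbar with hTdef
  have hcardS : S.card = d := by simp [hSdef]
  have hcardT : T.card = dbar := by simp [hTdef]
  -- positivity
  have hc : ∀ s ∈ S, 0 < ((I s).card : ℝ) := by
    intro s hs; exact_mod_cast maxIndep_card_pos G (I s) (hmax s hs) hV
  have hb : ∀ t ∈ T, 0 < ((Ibar t).card : ℝ) := by
    intro t ht; exact_mod_cast maxIndep_card_pos G (Ibar t) (hmaxb t ht) hV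
  -- row sums of a equal c
  have hrowa : ∀ s ∈ S, ∑ t ∈ T, ((I s ∩ Ibar t).card : ℝ) = ((I s).card : ℝ) := by
    intro s _
    exact_mod_cast congrArg (Nat.cast : ℕ → ℝ)
      (partition_card dbar Ibar hdisjb hcovb (I s))
  have hcola : ∀ t ∈ T, ∑ s ∈ S, ((I s ∩ Ibar t).card : ℝ) = ((Ibar t).card : ℝ) := by
    intro t _
    have := partition_card d I hdisj hcov (Ibar t)
    push_cast [← this]
    exact Finset.sum_congr rfl (fun s _ => by rw [Finset.inter_comm])
  -- the per-row/column equalities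
  have hcross1 := crossSum G d dbar I Ibar hI hIbar hV
  have hcross2 := crossSum G dbar d Ibar I hIbar hI hV
  have hcolc : ∀ t ∈ T, ∑ s ∈ S, ((I s ∩ Ibar t).card : ℝ) / ((I s).card : ℝ) = 1 := by
    have := all_eq_one T
      (fun t => ∑ s ∈ S, ((Ibar t ∩ I s).card : ℝ) / ((I s).card : ℝ))
      (fun t ht => hmv (Ibar t) ((hmaxb t ht).1))
      (by rw [hcross1, hcardT, hdd])
    intro t ht
    rw [← this t ht]
    exact Finset.sum_congr rfl (fun s _ => by rw [Finset.inter_comm])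
  have hrowb : ∀ s ∈ S, ∑ t ∈ T, ((I s ∩ Ibar t).card : ℝ) / ((Ibar t).card : ℝ) = 1 := by
    have := all_eq_one S
      (fun s => ∑ t ∈ T, ((I s ∩ Ibar t).card : ℝ) / ((Ibar t).card : ℝ))
      (fun s hs => hmvb (I s) ((hmax s hs).1))
      (by rw [hcross2, hcardS, hdd])
    exact this
  -- apply the key lemma
  have hkey := keyLemma (S.card + T.card) S T
    (fun s t => ((I s ∩ Ibar t).card : ℝ))
    (fun s => ((I s).card : ℝ)) (fun t => ((Ibar t).card : ℝ))
    le_rfl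
    (fun s _ t _ => by positivity)
    hc hb hrowb hrowa hcolc hcola j hj k hk
  by_contra hne2
  have hpos : (I j ∩ Ibar k).card ≠ 0 := by
    intro h; exact hne2 (Finset.card_eq_zero.mp h)
  have : ((I j).card : ℝ) = ((Ibar k).card : ℝ) := hkey (Nat.cast_ne_zero.mpr hpos)
  exact hne (by exact_mod_cast this)
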